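/- There exists a constant c > 0 such that the following holds. Suppose G, H, W, k, n satisfy Assumption (★) with constant c. Let A be a set of vertices of G such that no two vertices of A are consecutive, the continuous closure Ā of A contains no problematic vertex, and |Ā| ≤ k+2. Then A is an independent set in G. -/

import Mathlib

open Finset

/-- `σ` lists the vertices of `G` in the order of a Hamilton cycle `H`:
it is a bijection from `ZMod n` such that consecutive indices give adjacent vertices. -/
def IsHamOrder {V : Type} [Fintype V] (G : SimpleGraph V) (n : ℕ) (σ : ZMod n → V) : Prop :=
  Function.Bijective σ ∧ ∀ i : ZMod n, G.Adj (σ i) (σ (i + 1))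

/-- A vertex is problematic if it has degree at most `2k` or belongs to `W`. -/
def Problematic {V : Type} [Fintype V] [DecidableEq V] (G : SimpleGraph V)
    [DecidableRel G.Adj] (W : Finset V) (k : ℕ) (v : V) : Prop :=
  G.degree v ≤ 2 * k ∨ v ∈ W

/-- `G` has a cycle of length `ℓ` passing through all vertices of `S`. -/
def HasCycleThrough {V : Type} (G : SimpleGraph V) (ℓ : ℕ) (S : Set V) : Prop :=
  ∃ (u : V) (w : G.Walk u u), w.IsCycle ∧ w.length = ℓ ∧ ∀ x ∈ S, x ∈ w.support

/-- Assumption (★) with constant `c`: `G` is a graph on `n` vertices with Hamilton cycle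
(order) `σ`, independence number at most `k`, `W` has at most `20k²` vertices, `G` has no
cycle of length `n − 1` through all of `W`, and `n ≥ c·k^(11/5)`. -/
def StarAssumption {V : Type} [Fintype V] [DecidableEq V] (G : SimpleGraph V) [DecidableRel G.Adj]
    (n k : ℕ) (σ : ZMod n → V) (W : Finset V) (c : ℝ) : Prop :=
  Fintype.card V = n ∧ IsHamOrder G n σ ∧
  (∀ s : Finset V, (∀ u ∈ s, ∀ v ∈ s, u ≠ v → ¬ G.Adj u v) → s.card ≤ k) ∧
  W.card ≤ 20 * k ^ 2 ∧
  ¬ HasCycleThrough G (n - 1) (W : Set V) ∧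
  c * (k : ℝ) ^ ((11 : ℝ) / 5) ≤ (n : ℝ)

/-- Two vertices are consecutive if they are neighbours on the Hamilton cycle. -/
def Consec {V : Type} (n : ℕ) (σ : ZMod n → V) (u v : V) : Prop :=
  ∃ i : ZMod n, (σ i = u ∧ σ (i + 1) = v) ∨ (σ i = v ∧ σ (i + 1) = u)

/-- A continuous set of vertices: one forming a subpath (interval) of the Hamilton cycle. -/
def ContinuousSet {V : Type} [DecidableEq V] (n : ℕ) (σ : ZMod n → V) (S : Finset V) : Prop :=
  ∃ (i : ZMod n) (m : ℕ), S = (Finset.range m).image (fun j : ℕ => σ (i + (j : ZMod n)))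

/-- `B` is a continuous closure of `A`: a minimum-size continuous set containing `A`. -/
def IsClosure {V : Type} [DecidableEq V] (n : ℕ) (σ : ZMod n → V) (A B : Finset V) : Prop :=
  ContinuousSet n σ B ∧ A ⊆ B ∧
    ∀ B' : Finset V, ContinuousSet n σ B' → A ⊆ B' → B.card ≤ B'.card

/-- An arc-system: a family of arcs together with a choice of continuous closure for each
arc, such that closures of distinct arcs are disjoint, closures contain no problematic
vertex, and no arc contains two consecutive vertices. -/
structure ArcSystem {V : Type} [Fintype V] [DecidableEq V] (G : SimpleGraph V)
    [DecidableRel G.Adj] (n k : ℕ) (σ : ZMod n → V) (W : Finset V) where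
  arcs : Finset (Finset V)
  cl : Finset V → Finset V
  closure_spec : ∀ A ∈ arcs, IsClosure n σ A (cl A)
  closures_disjoint : ∀ A ∈ arcs, ∀ B ∈ arcs, A ≠ B → Disjoint (cl A) (cl B)
  no_problematic : ∀ A ∈ arcs, ∀ v ∈ cl A, ¬ Problematic G W k v
  no_consec : ∀ A ∈ arcs, ∀ u ∈ A, ∀ v ∈ A, u ≠ v → ¬ Consec n σ u v

namespace ArcSystem

variable {V : Type} [Fintype V] [DecidableEq V] {G : SimpleGraph V} [DecidableRel G.Adj]
  {n k : ℕ} {σ : ZMod n → V} {W : Finset V}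

/-- An arc-system is independent if every closure has at most `k` vertices. -/
def Independent (𝒜 : ArcSystem G n k σ W) : Prop :=
  ∀ A ∈ 𝒜.arcs, (𝒜.cl A).card ≤ k

/-- Every arc of the system has at least `l` vertices. -/
def LengthGe (𝒜 : ArcSystem G n k σ W) (l : ℕ) : Prop :=
  ∀ A ∈ 𝒜.arcs, l ≤ A.card

end ArcSystem

/-- A vertex set `s` is `M₂`-free (for `G`) if the subgraph induced by `s`
contains no two vertex-disjoint edges. -/
def M2Free {V : Type} (G : SimpleGraph V) (s : Finset V) : Prop :=
  ¬ ∃ a b x y : V, a ∈ s ∧ b ∈ s ∧ x ∈ s ∧ y ∈ s ∧ G.Adj a b ∧ G.Adj x y ∧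
      a ≠ x ∧ a ≠ y ∧ b ≠ x ∧ b ≠ y

namespace ArcSystem

variable {V : Type} [Fintype V] [DecidableEq V] {G : SimpleGraph V} [DecidableRel G.Adj]
  {n k : ℕ} {σ : ZMod n → V} {W : Finset V}

/-- An arc-system is simple if it is independent and any two distinct arcs induce an
`M₂`-free subgraph of `G`. -/
def Simple (𝒜 : ArcSystem G n k σ W) : Prop :=
  𝒜.Independent ∧ ∀ A ∈ 𝒜.arcs, ∀ B ∈ 𝒜.arcs, A ≠ B → M2Free G (A ∪ B)

end ArcSystem

/-- `G[𝒜]` contains an independent set of size at least `m`. -/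
def HasIndepInArcs {V : Type} [Fintype V] [DecidableEq V] (G : SimpleGraph V)
    [DecidableRel G.Adj] {n k : ℕ} {σ : ZMod n → V} {W : Finset V}
    (𝒜 : ArcSystem G n k σ W) (m : ℕ) : Prop :=
  ∃ I : Finset V, (∀ v ∈ I, ∃ A ∈ 𝒜.arcs, v ∈ A) ∧
    (∀ u ∈ I, ∀ v ∈ I, u ≠ v → ¬ G.Adj u v) ∧ m ≤ I.card

/-- The constants `a_p = 10·3^p`. -/
def aP (p : ℕ) : ℕ := 10 * 3 ^ p

/-- The constants `b_p = 1000^p·4^(p²)`. -/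
def bP (p : ℕ) : ℕ := 1000 ^ p * 4 ^ (p ^ 2)


section S4sec
set_option maxHeartbeats 1000000
set_option linter.unusedSectionVars false

namespace S4
open SimpleGraph

variable {V : Type} [DecidableEq V] {G : SimpleGraph V} {n : ℕ} {σ : ZMod n → V}

variable {V : Type} {G : SimpleGraph V} {n : ℕ} {σ : ZMod n → V}

/-- Path along the Hamilton order starting at index `a` with `l` steps. -/
def pathAlong (σ : ZMod n → V) (hσ : ∀ i : ZMod n, G.Adj (σ i) (σ (i + 1)))
    (a : ZMod n) : (l : ℕ) → G.Walk (σ a) (σ (a + l))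
  | 0 => Walk.nil.copy rfl (by push_cast; ring_nf)
  | (l + 1) => ((Walk.cons (hσ a) (pathAlong σ hσ (a + 1) l)).copy rfl (by push_cast; ring))

@[simp] lemma pathAlong_length (hσ : ∀ i : ZMod n, G.Adj (σ i) (σ (i + 1))) (a : ZMod n)
    (l : ℕ) : (pathAlong σ hσ a l).length = l := by
  induction l generalizing a with
  | zero => simp [pathAlong]
  | succ l ih => simp [pathAlong, ih]

lemma pathAlong_support (hσ : ∀ i : ZMod n, G.Adj (σ i) (σ (i + 1))) (a : ZMod n)
    (l : ℕ) : (pathAlong σ hσ a l).support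
      = (List.range (l + 1)).map (fun j : ℕ => σ (a + j)) := by
  induction l generalizing a with
  | zero => simp [pathAlong, List.range_succ]
  | succ l ih =>
    rw [pathAlong]
    rw [Walk.support_copy, Walk.support_cons, ih]
    rw [List.range_succ_eq_map (n := l+1)]
    simp only [List.map_cons, List.map_map]
    congr 1
    · simp
    · apply List.map_congr_left
      intro j hj
      simp only [Function.comp_apply]
      congr 1
      push_cast
      ring

lemma pathAlong_edges (hσ : ∀ i : ZMod n, G.Adj (σ i) (σ (i + 1))) (a : ZMod n)
    (l : ℕ) : (pathAlong σ hσ a l).edges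
      = (List.range l).map (fun j : ℕ => s(σ (a + j), σ (a + j + 1))) := by
  induction l generalizing a with
  | zero => simp [pathAlong]
  | succ l ih =>
    rw [pathAlong]
    rw [Walk.edges_copy, Walk.edges_cons, ih]
    rw [List.range_succ_eq_map (n := l)]
    simp only [List.map_cons, List.map_map]
    congr 1
    · simp
    · apply List.map_congr_left
      intro j hj
      simp only [Function.comp_apply]
      congr 2 <;> push_cast <;> ring


variable {V : Type} [DecidableEq V] {G : SimpleGraph V}

lemma exists_cons_of_isCycle {u : V} (w : G.Walk u u) (hw : w.IsCycle) :
    ∃ (s : V) (h : G.Adj u s) (q : G.Walk s u), w = Walk.cons h q := by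
  cases w with
  | nil => exact absurd rfl hw.ne_nil
  | cons h q => exact ⟨_, h, q, rfl⟩

lemma end_mem_tail_support {u : V} (w : G.Walk u u) (hw : ¬ w.Nil) :
    u ∈ w.support.tail := by
  cases w with
  | nil => exact absurd Walk.Nil.nil hw
  | cons h q => simpa using q.end_mem_support

lemma mem_support_iff_mem_tail {u x : V} (w : G.Walk u u) (hw : ¬ w.Nil) :
    x ∈ w.support ↔ x ∈ w.support.tail := by
  constructor
  · intro h
    rw [w.support_eq_cons, List.mem_cons] at h
    rcases h with h | h
    · rw [h]; exact end_mem_tail_support w hw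
    · exact h
  · intro h
    rw [w.support_eq_cons, List.mem_cons]
    exact Or.inr h

lemma support_eq_dropLast_concat {s u : V} (q : G.Walk s u) :
    q.support = q.support.dropLast ++ [u] := by
  have h := q.reverse.support_eq_cons
  rw [Walk.support_reverse] at h
  have h2 : q.support = (q.support.reverse.tail).reverse ++ [u] := by
    conv_lhs => rw [← q.support.reverse_reverse, h]
    simp [List.reverse_cons]
  rw [h2, List.dropLast_concat]

lemma cycle_dropLast_support_nodup {u : V} {w : G.Walk u u} (hw : w.IsCycle) :
    w.support.dropLast.Nodup := by
  cases w with
  | nil => exact absurd rfl hw.ne_nil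
  | cons h q =>
    rename_i s
    have ht : q.support.Nodup := by simpa using hw.support_nodup
    have hql : q.support = q.support.dropLast ++ [u] := support_eq_dropLast_concat q
    have hd : q.support.dropLast.Nodup ∧ u ∉ q.support.dropLast := by
      have := hql ▸ ht
      rw [List.nodup_append'] at this
      exact ⟨this.1, fun hu => this.2.2 hu (by simp)⟩
    have hsup : (Walk.cons h q).support.dropLast = u :: q.support.dropLast := by
      rw [Walk.support_cons, List.dropLast_cons_of_ne_nil q.support_ne_nil]
    rw [hsup, List.nodup_cons]
    exact ⟨hd.2, hd.1⟩

lemma dart_eq_of_fst_eq {u : V} {w : G.Walk u u} (hw : w.IsCycle) {d d' : G.Dart}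
    (hd : d ∈ w.darts) (hd' : d' ∈ w.darts) (h : d.fst = d'.fst) : d = d' := by
  apply List.inj_on_of_nodup_map (f := fun d : G.Dart => d.fst) _ hd hd' h
  rw [Walk.map_fst_darts]
  exact cycle_dropLast_support_nodup hw

lemma dart_eq_of_snd_eq {u : V} {w : G.Walk u u} (hw : w.IsCycle) {d d' : G.Dart}
    (hd : d ∈ w.darts) (hd' : d' ∈ w.darts) (h : d.snd = d'.snd) : d = d' := by
  apply List.inj_on_of_nodup_map (f := fun d : G.Dart => d.snd) _ hd hd' h
  rw [Walk.map_snd_darts]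
  exact hw.support_nodup

/-- Rotation of a cycle at a support vertex, decomposed into first edge and the rest. -/
lemma rotate_decomp {u p : V} (c : G.Walk u u) (hc : c.IsCycle) (hp : p ∈ c.support) :
    ∃ (s : V) (h : G.Adj p s) (q : G.Walk s p),
      (Walk.cons h q).IsCycle ∧ (Walk.cons h q).length = c.length ∧
      (∀ x, x ∈ (Walk.cons h q).support ↔ x ∈ c.support) ∧
      ((Walk.cons h q).darts.Perm c.darts) := by
  obtain ⟨s, h, q, hq⟩ := exists_cons_of_isCycle (c.rotate p hp) (hc.rotate hp)
  have hdarts : (c.rotate p hp).darts.Perm c.darts := (Walk.rotate_darts c p hp).perm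
  have hcyc : (c.rotate p hp).IsCycle := hc.rotate hp
  refine ⟨s, h, q, ?_, ?_, ?_, ?_⟩ <;> rw [← hq]
  · exact hcyc
  · rw [← Walk.length_darts, ← Walk.length_darts]
    exact hdarts.length_eq
  · intro x
    rw [mem_support_iff_mem_tail _ hcyc.not_nil, mem_support_iff_mem_tail _ hc.not_nil]
    exact (Walk.support_rotate c p hp).perm.mem_iff
  · exact hdarts

variable [Fintype V] [DecidableRel G.Adj]

lemma exists_cons_of_ne {a b : V} (hab : a ≠ b) (w : G.Walk a b) :
    ∃ (s : V) (h : G.Adj a s) (q : G.Walk s b), w = Walk.cons h q := by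
  cases w with
  | nil => exact absurd rfl hab
  | cons h q => exact ⟨_, h, q, rfl⟩

lemma insert_vertex {k : ℕ}
    (hα : ∀ s : Finset V, (∀ x ∈ s, ∀ y ∈ s, x ≠ y → ¬ G.Adj x y) → s.card ≤ k)
    {u z : V} (c : G.Walk u u) (hc : c.IsCycle) (hz : z ∉ c.support)
    (hN : k + 1 ≤ (c.support.toFinset.filter (fun v => G.Adj z v)).card) :
    ∃ (u' : V) (c' : G.Walk u' u'), c'.IsCycle ∧ c'.length = c.length + 1 ∧
      (∀ x, x ∈ c'.support ↔ x ∈ c.support ∨ x = z) := by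
  classical
  set N : Finset V := c.support.toFinset.filter (fun v => G.Adj z v) with hNdef
  have hNsup : ∀ p ∈ N, p ∈ c.support := by
    intro p hp; rw [hNdef, Finset.mem_filter, List.mem_toFinset] at hp; exact hp.1
  have hNadj : ∀ p ∈ N, G.Adj z p := by
    intro p hp; rw [hNdef, Finset.mem_filter] at hp; exact hp.2
  have hrot : ∀ p ∈ N, ∃ (s : V) (h : G.Adj p s) (q : G.Walk s p),
      (Walk.cons h q).IsCycle ∧ (Walk.cons h q).length = c.length ∧
      (∀ x, x ∈ (Walk.cons h q).support ↔ x ∈ c.support) ∧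
      ((Walk.cons h q).darts.Perm c.darts) :=
    fun p hp => rotate_decomp c hc (hNsup p hp)
  choose nxt hadj qq hcyc hlen hsupp hdarts using hrot
  have hdmem : ∀ (p : V) (hp : p ∈ N), Dart.mk (p, nxt p hp) (hadj p hp) ∈ c.darts := by
    intro p hp
    apply (hdarts p hp).subset
    rw [Walk.darts_cons]
    exact List.mem_cons_self
  have hinj : ∀ (p : V) (hp : p ∈ N) (p' : V) (hp' : p' ∈ N),
      nxt p hp = nxt p' hp' → p = p' := by
    intro p hp p' hp' h
    have := dart_eq_of_snd_eq hc (hdmem p hp) (hdmem p' hp') h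
    exact congrArg (fun d : G.Dart => d.fst) this
  have hznsupN : ∀ p ∈ N, z ≠ p := by
    intro p hp h; exact hz (h ▸ hNsup p hp)
  by_cases hcase : ∃ (p : V) (hp : p ∈ N), nxt p hp ∈ N
  · -- simple insertion between p and nxt p
    obtain ⟨p, hp, hpn⟩ := hcase
    set s := nxt p hp with hs
    set qp := qq p hp with hqp
    have hw_cyc : (Walk.cons (hadj p hp) qp).IsCycle := hcyc p hp
    have hqp_nodup : qp.support.Nodup := by
      have := hw_cyc.support_nodup
      rwa [Walk.support_cons, List.tail_cons] at this
    have hzqp : z ∉ qp.support := by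
      intro hmem
      apply hz
      rw [← hsupp p hp z, Walk.support_cons]
      exact List.mem_cons_of_mem _ hmem
    refine ⟨p, Walk.cons (hNadj p hp).symm (Walk.cons (hNadj s hpn) qp), ?_, ?_, ?_⟩
    · rw [Walk.cons_isCycle_iff]
      constructor
      · rw [Walk.isPath_def, Walk.support_cons, List.nodup_cons]
        exact ⟨hzqp, hqp_nodup⟩
      · rw [Walk.edges_cons, List.mem_cons]
        rintro (h | h)
        · rw [Sym2.eq_iff] at h
          rcases h with ⟨h1, h2⟩ | ⟨h1, h2⟩
          · exact hznsupN p hp h1.symm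
          · exact (G.ne_of_adj (hadj p hp)) h1
        · exact hzqp (Walk.snd_mem_support_of_mem_edges qp h)
    · have h1 : (Walk.cons (hadj p hp) qp).length = c.length := hlen p hp
      simp only [Walk.length_cons] at h1 ⊢
      omega
    · intro x
      have h2 : x ∈ (Walk.cons (hadj p hp) qp).support ↔ x ∈ c.support := hsupp p hp x
      simp only [Walk.support_cons, List.mem_cons] at h2 ⊢
      tauto
  · -- crossing insertion
    push_neg at hcase
    set N' : Finset V := N.attach.image (fun x => nxt x.1 x.2) with hN'def
    have hN'card : k + 1 ≤ N'.card := by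
      rw [hN'def, Finset.card_image_of_injOn, Finset.card_attach]
      · exact hN
      · intro x _ y _ h
        exact Subtype.ext (hinj x.1 x.2 y.1 y.2 h)
    have hedge : ¬ (∀ x ∈ N', ∀ y ∈ N', x ≠ y → ¬ G.Adj x y) := by
      intro hind
      have := hα N' hind
      omega
    push_neg at hedge
    obtain ⟨x, hx, y, hy, hxyne, hxy⟩ := hedge
    obtain ⟨⟨p, hp⟩, -, rfl⟩ := Finset.mem_image.mp hx
    obtain ⟨⟨q'', hq''⟩, -, rfl⟩ := Finset.mem_image.mp hy
    have hpq : p ≠ q'' := by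
      rintro rfl
      exact hxyne rfl
    set qp := qq p hp with hqpdef
    have hw_cyc : (Walk.cons (hadj p hp) qp).IsCycle := hcyc p hp
    have hq''qp : q'' ∈ qp.support := by
      have h1 : q'' ∈ (Walk.cons (hadj p hp) qp).support := (hsupp p hp q'' : _ ↔ _).mpr (hNsup q'' hq'')
      rw [Walk.support_cons, List.mem_cons] at h1
      rcases h1 with h1 | h1
      · exact absurd h1.symm hpq
      · exact h1
    set w₁ := qp.takeUntil q'' hq''qp with hw₁def
    set w₂ := qp.dropUntil q'' hq''qp with hw₂def
    have hspec : w₁.append w₂ = qp := qp.take_spec hq''qp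
    have hq''p : q'' ≠ p := by
      intro h
      -- q'' = p contradicts hpq
      exact hpq h.symm
    obtain ⟨s2, h2, w₃, hw2⟩ := exists_cons_of_ne hq''p w₂
    -- identify s2 with nxt q''
    have hdart2 : Dart.mk (q'', s2) h2 ∈ c.darts := by
      apply (hdarts p hp).subset
      rw [Walk.darts_cons]
      apply List.mem_cons_of_mem
      apply qp.darts_dropUntil_subset hq''qp
      rw [← hw₂def, hw2, Walk.darts_cons]
      exact List.mem_cons_self
    have hs2 : s2 = nxt q'' hq'' := by
      have := dart_eq_of_fst_eq hc hdart2 (hdmem q'' hq'') rfl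
      exact congrArg (fun d : G.Dart => d.snd) this
    have hA' : G.Adj (nxt p hp) s2 := hs2 ▸ hxy
    -- supports
    have hqp_nodup : qp.support.Nodup := by
      have := hw_cyc.support_nodup
      rwa [Walk.support_cons, List.tail_cons] at this
    have hsupp_split : qp.support = w₁.support ++ w₃.support := by
      conv_lhs => rw [← hspec, Walk.support_append, hw2, Walk.support_cons, List.tail_cons]
    have hnodup13 : (w₁.support ++ w₃.support).Nodup := hsupp_split ▸ hqp_nodup
    have hzqp : z ∉ qp.support := by
      intro hmem
      apply hz
      rw [← hsupp p hp z, Walk.support_cons]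
      exact List.mem_cons_of_mem _ hmem
    have hz1 : z ∉ w₁.support := fun h => hzqp (hsupp_split ▸ List.mem_append_left _ h)
    have hz3 : z ∉ w₃.support := fun h => hzqp (hsupp_split ▸ List.mem_append_right _ h)
    have hnp1 : nxt p hp ∈ w₁.support := w₁.start_mem_support
    have hs23 : s2 ∈ w₃.support := w₃.start_mem_support
    have hdisj : ∀ a, a ∈ w₁.support → a ∈ w₃.support → False := by
      have := (List.nodup_append'.mp hnodup13).2.2
      intro a h1 h3
      exact this h1 h3
    refine ⟨p, Walk.cons (hNadj p hp).symm (Walk.cons (hNadj q'' hq'')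
      ((w₁.reverse).append (Walk.cons hA' w₃))), ?_, ?_, ?_⟩
    · rw [Walk.cons_isCycle_iff]
      constructor
      · rw [Walk.isPath_def, Walk.support_cons, Walk.support_append,
          Walk.support_reverse, Walk.support_cons, List.tail_cons, List.nodup_cons]
        constructor
        · intro hmem
          rw [List.mem_append, List.mem_reverse] at hmem
          rcases hmem with h | h
          · exact hz1 h
          · exact hz3 h
        · rw [List.nodup_append']
          refine ⟨List.nodup_reverse.mpr (List.nodup_append'.mp hnodup13).1,
            (List.nodup_append'.mp hnodup13).2.1, ?_⟩
          intro a ha hb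
          exact hdisj a (List.mem_reverse.mp ha) hb
      · rw [Walk.edges_cons, Walk.edges_append, Walk.edges_reverse, Walk.edges_cons,
          List.mem_cons]
        rintro (h | h)
        · rw [Sym2.eq_iff] at h
          rcases h with ⟨h1, h2⟩ | ⟨h1, h2⟩
          · exact hznsupN q'' hq'' h2
          · exact hq''p h1.symm
        · rw [List.mem_append, List.mem_reverse, List.mem_cons] at h
          rcases h with h | h | h
          · exact hz1 (Walk.snd_mem_support_of_mem_edges w₁ h)
          · rw [Sym2.eq_iff] at h
            rcases h with ⟨h1, h2⟩ | ⟨h1, h2⟩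
            · exact hz3 (by rw [h2]; exact hs23)
            · exact hz1 (by rw [h2]; exact hnp1)
          · exact hz3 (Walk.snd_mem_support_of_mem_edges w₃ h)
    · have h1 : (Walk.cons (hadj p hp) qp).length = c.length := hlen p hp
      have h2 : qp.length = w₁.length + w₂.length := by rw [← hspec, Walk.length_append]
      have h3 : w₂.length = w₃.length + 1 := by rw [hw2, Walk.length_cons]
      rw [Walk.length_cons] at h1
      simp only [Walk.length_cons, Walk.length_append, Walk.length_reverse]
      omega
    · intro x
      have h2 : x ∈ (Walk.cons (hadj p hp) qp).support ↔ x ∈ c.support := hsupp p hp x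
      rw [Walk.support_cons, hsupp_split] at h2
      simp only [Walk.support_cons, Walk.support_append, Walk.support_reverse,
        List.tail_cons, List.mem_cons, List.mem_append, List.mem_reverse] at h2 ⊢
      tauto
lemma grow {k : ℕ}
    (hα : ∀ s : Finset V, (∀ x ∈ s, ∀ y ∈ s, x ≠ y → ¬ G.Adj x y) → s.card ≤ k)
    (ω : V) (m : ℕ) :
    ∀ (S : Finset V), S.card = m →
    ∀ (u : V) (c : G.Walk u u), c.IsCycle →
    (∀ x ∈ S, x ∉ c.support) →
    (∀ x ∈ S, 2 * k + 1 ≤ G.degree x) →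
    (∀ x ∈ S, ∀ v, G.Adj x v → v ∈ c.support ∨ v ∈ S ∨ v = ω) →
    S.card ≤ k →
    ∃ (u' : V) (c' : G.Walk u' u'), c'.IsCycle ∧ c'.length = c.length + S.card ∧
      (∀ x, x ∈ c'.support ↔ x ∈ c.support ∨ x ∈ S) := by
  induction m with
  | zero =>
    intro S hcard u c hc _ _ _ _
    refine ⟨u, c, hc, by omega, ?_⟩
    intro x
    rw [Finset.card_eq_zero] at hcard
    subst hcard
    simp
  | succ m ih =>
    intro S hcard u c hc hSsup hdeg hnbr hSk
    have hne : S.Nonempty := by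
      rw [← Finset.card_pos, hcard]; omega
    obtain ⟨z, hz⟩ := hne
    have key : k + 1 ≤ (c.support.toFinset.filter (fun v => G.Adj z v)).card := by
      set N := c.support.toFinset.filter (fun v => G.Adj z v) with hN
      have hsub : G.neighborFinset z ⊆ N ∪ (S.erase z) ∪ {ω} := by
        intro v hv
        rw [SimpleGraph.mem_neighborFinset] at hv
        rcases hnbr z hz v hv with h | h | h
        · exact Finset.mem_union_left _ (Finset.mem_union_left _
            (Finset.mem_filter.mpr ⟨List.mem_toFinset.mpr h, hv⟩))
        · refine Finset.mem_union_left _ (Finset.mem_union_right _ ?_)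
          rw [Finset.mem_erase]
          exact ⟨fun hzz => G.irrefl (hzz ▸ hv), h⟩
        · subst h
          exact Finset.mem_union_right _ (Finset.mem_singleton_self _)
      have h1 : G.degree z ≤ N.card + (S.erase z).card + 1 := by
        calc G.degree z = (G.neighborFinset z).card := rfl
          _ ≤ (N ∪ (S.erase z) ∪ {ω}).card := Finset.card_le_card hsub
          _ ≤ (N ∪ (S.erase z)).card + ({ω} : Finset V).card := Finset.card_union_le _ _
          _ ≤ N.card + (S.erase z).card + 1 := by
              have := Finset.card_union_le N (S.erase z)
              simp only [Finset.card_singleton]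
              omega
      have h2 : (S.erase z).card = S.card - 1 := Finset.card_erase_of_mem hz
      have h3 := hdeg z hz
      omega
    obtain ⟨u1, c1, hc1, hlen1, hsup1⟩ := insert_vertex hα c hc (hSsup z hz) key
    obtain ⟨u', c', hc', hlen', hsup'⟩ := ih (S.erase z)
      (by rw [Finset.card_erase_of_mem hz, hcard]; omega) u1 c1 hc1
      (by
        intro x hx
        rw [Finset.mem_erase] at hx
        rw [hsup1 x]
        push_neg
        exact ⟨hSsup x hx.2, hx.1⟩)
      (fun x hx => hdeg x (Finset.mem_of_mem_erase hx))
      (by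
        intro x hx v hv
        rcases hnbr x (Finset.mem_of_mem_erase hx) v hv with h | h | h
        · exact Or.inl ((hsup1 v).mpr (Or.inl h))
        · by_cases hvz : v = z
          · exact Or.inl ((hsup1 v).mpr (Or.inr hvz))
          · exact Or.inr (Or.inl (Finset.mem_erase.mpr ⟨hvz, h⟩))
        · exact Or.inr (Or.inr h))
      (le_trans (Finset.card_le_card (Finset.erase_subset _ _)) hSk)
    refine ⟨u', c', hc', ?_, ?_⟩
    · rw [hlen', hlen1, Finset.card_erase_of_mem hz, hcard]
      omega
    · intro x
      rw [hsup' x, hsup1 x, Finset.mem_erase]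
      constructor
      · rintro ((h | h) | h)
        · exact Or.inl h
        · exact Or.inr (h ▸ hz)
        · exact Or.inr h.2
      · rintro (h | h)
        · exact Or.inl (Or.inl h)
        · by_cases hxz : x = z
          · exact Or.inl (Or.inr hxz)
          · exact Or.inr ⟨hxz, h⟩
lemma cast_inj_lt {n : ℕ} (hn : 0 < n) {x y : ℕ} (hx : x < n) (hy : y < n)
    (h : (x : ZMod n) = y) : x = y := by
  haveI : NeZero n := ⟨by omega⟩
  have := congrArg ZMod.val h
  rwa [ZMod.val_cast_of_lt hx, ZMod.val_cast_of_lt hy] at this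

lemma cast_inj_one_le {n : ℕ} (hn : 0 < n) {x y : ℕ} (hx1 : 1 ≤ x) (hx : x ≤ n)
    (hy1 : 1 ≤ y) (hy : y ≤ n) (h : (x : ZMod n) = y) : x = y := by
  haveI : NeZero n := ⟨by omega⟩
  have hv := congrArg ZMod.val h
  rw [ZMod.val_natCast, ZMod.val_natCast] at hv
  rcases lt_or_eq_of_le hx with h1 | h1
  · rcases lt_or_eq_of_le hy with h2 | h2
    · rwa [Nat.mod_eq_of_lt h1, Nat.mod_eq_of_lt h2] at hv
    · subst h2
      rw [Nat.mod_eq_of_lt h1, Nat.mod_self] at hv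
      omega
  · subst h1
    rcases lt_or_eq_of_le hy with h2 | h2
    · rw [Nat.mod_self, Nat.mod_eq_of_lt h2] at hv
      omega
    · omega

lemma build_cycle {k n : ℕ} {σ : ZMod n → V}
    (hσbij : Function.Bijective σ) (hσadj : ∀ i : ZMod n, G.Adj (σ i) (σ (i + 1)))
    (hα : ∀ s : Finset V, (∀ x ∈ s, ∀ y ∈ s, x ≠ y → ¬ G.Adj x y) → s.card ≤ k)
    (a : ZMod n) (d : ℕ) (hd2 : 2 ≤ d) (hdk : d ≤ k + 1) (hnk : 2 * k + 6 ≤ n)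
    (hadj : G.Adj (σ a) (σ (a + (d : ZMod n))))
    (hdeg : ∀ j : ℕ, 1 ≤ j → j ≤ d - 1 → 2 * k + 1 ≤ G.degree (σ (a + (j : ZMod n)))) :
    ∃ (u' : V) (c' : G.Walk u' u'), c'.IsCycle ∧ c'.length = n - 1 ∧
      ∀ x : V, x ≠ σ (a + (1 : ZMod n)) → x ∈ c'.support := by
  have hn0 : 0 < n := by omega
  haveI : NeZero n := ⟨by omega⟩
  have hdn : d ≤ n := by omega
  have hσinj : Function.Injective σ := hσbij.1
  -- the base path
  have hend : (a + (d : ZMod n)) + ((n - d : ℕ) : ZMod n) = a := by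
    rw [Nat.cast_sub hdn, ZMod.natCast_self]
    ring
  set p0 : G.Walk (σ (a + (d : ZMod n))) (σ a) :=
    (pathAlong σ hσadj (a + (d : ZMod n)) (n - d)).copy rfl (congrArg σ hend) with hp0def
  have hp0supp : p0.support
      = (List.range (n - d + 1)).map (fun j : ℕ => σ (a + (d : ZMod n) + (j : ZMod n))) := by
    rw [hp0def, Walk.support_copy, pathAlong_support]
  have hp0edges : p0.edges
      = (List.range (n - d)).map
        (fun j : ℕ => s(σ (a + (d : ZMod n) + (j : ZMod n)),
          σ (a + (d : ZMod n) + (j : ZMod n) + 1))) := by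
    rw [hp0def, Walk.edges_copy, pathAlong_edges]
  have hp0len : p0.length = n - d := by
    rw [hp0def, Walk.length_copy, pathAlong_length]
  -- index cancellation tool
  have hcancel : ∀ {x y : ℕ}, σ (a + (x : ZMod n)) = σ (a + (y : ZMod n)) →
      ((x : ZMod n)) = (y : ZMod n) := by
    intro x y h
    have := hσinj h
    exact add_left_cancel this
  set c₀ : G.Walk (σ a) (σ a) := Walk.cons hadj p0 with hc₀def
  -- membership characterisation for c₀.support
  have hmem0 : ∀ x, x ∈ c₀.support ↔
      ∃ t : ℕ, t ≤ n ∧ (t = 0 ∨ d ≤ t) ∧ x = σ (a + (t : ZMod n)) := by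
    intro x
    rw [hc₀def, Walk.support_cons, List.mem_cons, hp0supp]
    constructor
    · rintro (rfl | h)
      · exact ⟨0, by omega, Or.inl rfl, by simp⟩
      · obtain ⟨j, hj, rfl⟩ := List.mem_map.mp h
        rw [List.mem_range] at hj
        refine ⟨d + j, by omega, Or.inr (by omega), ?_⟩
        push_cast
        ring_nf
    · rintro ⟨t, htn, (rfl | hdt), rfl⟩
      · left; simp
      · right
        apply List.mem_map.mpr
        refine ⟨t - d, List.mem_range.mpr (by omega), ?_⟩
        congr 1
        rw [Nat.cast_sub hdt]
        ring
  have hc₀cyc : c₀.IsCycle := by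
    rw [hc₀def, Walk.cons_isCycle_iff]
    constructor
    · rw [Walk.isPath_def, hp0supp]
      apply (List.nodup_range (n := n - d + 1)).map_on
      intro j hj j' hj' h
      rw [List.mem_range] at hj hj'
      have h2 := add_left_cancel (hσinj h)
      exact cast_inj_lt hn0 (by omega) (by omega) h2
    · rw [hp0edges]
      intro hmem
      obtain ⟨j, hj, hEq⟩ := List.mem_map.mp hmem
      rw [List.mem_range] at hj
      rw [Sym2.eq_iff] at hEq
      rcases hEq with ⟨h1, h2⟩ | ⟨h1, h2⟩
      · -- σ (a+d+j) = σ a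
        have : ((d + j : ℕ) : ZMod n) = ((0 : ℕ) : ZMod n) := by
          have h3 : σ (a + ((d + j : ℕ) : ZMod n)) = σ (a + ((0 : ℕ) : ZMod n)) := by
            push_cast
            convert h1 using 2 <;> ring
          exact hcancel h3
        have := cast_inj_lt hn0 (by omega) (by omega) this
        omega
      · -- σ (a+d+j) = σ (a+d) and σ (a+d+j+1) = σ a
        have hj0 : ((d + j : ℕ) : ZMod n) = ((d : ℕ) : ZMod n) := by
          have h3 : σ (a + ((d + j : ℕ) : ZMod n)) = σ (a + ((d : ℕ) : ZMod n)) := by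
            push_cast
            convert h1 using 2 <;> ring
          exact hcancel h3
        have hj0' : d + j = d := cast_inj_lt hn0 (by omega) (by omega) hj0
        have hj1 : ((d + j + 1 : ℕ) : ZMod n) = ((0 : ℕ) : ZMod n) := by
          have h3 : σ (a + ((d + j + 1 : ℕ) : ZMod n)) = σ (a + ((0 : ℕ) : ZMod n)) := by
            push_cast
            convert h2 using 2 <;> ring
          exact hcancel h3
        have := cast_inj_lt hn0 (by omega) (by omega) hj1
        omega
  have hc₀len : c₀.length = n - d + 1 := by
    rw [hc₀def, Walk.length_cons, hp0len]
  -- the set of vertices to reinsert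
  set S : Finset V := (Finset.Icc 2 (d - 1)).image (fun j : ℕ => σ (a + (j : ZMod n)))
    with hSdef
  have hScard : S.card = d - 2 := by
    rw [hSdef, Finset.card_image_of_injOn, Nat.card_Icc]
    · omega
    · intro x hx y hy h
      rw [Finset.mem_coe, Finset.mem_Icc] at hx hy
      exact cast_inj_lt hn0 (by omega) (by omega) (hcancel h)
  have hmemS : ∀ x, x ∈ S ↔ ∃ t : ℕ, 2 ≤ t ∧ t ≤ d - 1 ∧ x = σ (a + (t : ZMod n)) := by
    intro x
    rw [hSdef, Finset.mem_image]
    constructor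
    · rintro ⟨t, ht, rfl⟩
      rw [Finset.mem_Icc] at ht
      exact ⟨t, ht.1, ht.2, rfl⟩
    · rintro ⟨t, h1, h2, rfl⟩
      exact ⟨t, Finset.mem_Icc.mpr ⟨h1, h2⟩, rfl⟩
  have hSsup : ∀ x ∈ S, x ∉ c₀.support := by
    intro x hx hmem
    obtain ⟨t, ht2, htd, rfl⟩ := (hmemS x).mp hx
    obtain ⟨t', ht'n, ht'0, hEq⟩ := (hmem0 _).mp hmem
    have hcast := hcancel hEq
    rcases ht'0 with rfl | hdt'
    · have := cast_inj_lt hn0 (by omega) (by omega) hcast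
      omega
    · have := cast_inj_one_le hn0 (by omega) (by omega) (by omega) (by omega) hcast
      omega
  -- coverage
  have hcover : ∀ v : V, v ∈ c₀.support ∨ v ∈ S ∨ v = σ (a + (1 : ZMod n)) := by
    intro v
    obtain ⟨w, rfl⟩ := hσbij.2 v
    set t : ℕ := (w - a).val with htdef
    have htn : t < n := ZMod.val_lt _
    have hw : w = a + (t : ZMod n) := by
      rw [htdef, ZMod.natCast_val, ZMod.cast_id]
      ring
    by_cases h0 : t = 0
    · left
      rw [hmem0]
      exact ⟨t, by omega, Or.inl h0, by rw [hw]⟩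
    by_cases h1 : t = 1
    · right; right
      rw [hw, h1]
      norm_num
    by_cases hd' : t ≤ d - 1
    · right; left
      rw [hmemS]
      exact ⟨t, by omega, hd', by rw [hw]⟩
    · left
      rw [hmem0]
      exact ⟨t, by omega, Or.inr (by omega), by rw [hw]⟩
  -- apply grow
  obtain ⟨u', c', hc', hlen', hsup'⟩ := grow hα (σ (a + (1 : ZMod n))) S.card S rfl _ c₀
    hc₀cyc hSsup
    (by
      intro x hx
      obtain ⟨t, h1, h2, rfl⟩ := (hmemS x).mp hx
      exact hdeg t (by omega) (by omega))
    (fun x _ v _ => hcover v)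
    (by omega)
  refine ⟨u', c', hc', ?_, ?_⟩
  · rw [hlen', hc₀len, hScard]
    omega
  · intro x hx
    rw [hsup' x]
    rcases hcover x with h | h | h
    · exact Or.inl h
    · exact Or.inr h
    · exact absurd h hx

end S4
end S4sec

/-- There is a constant `c > 0` such that under Assumption (★) with
constant `c`: if `A` is a set of vertices no two of which are consecutive, whose continuous
closure `B` contains no problematic vertex and satisfies `|B| ≤ k + 2`, then `A` is an
independent set in `G`. -/
theorem statement4 :
    ∃ c : ℝ, 0 < c ∧
      ∀ (V : Type) [Fintype V] [DecidableEq V] (G : SimpleGraph V) [DecidableRel G.Adj]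
        (n k : ℕ) (σ : ZMod n → V) (W : Finset V),
        StarAssumption G n k σ W c →
        ∀ A B : Finset V,
          (∀ u ∈ A, ∀ v ∈ A, u ≠ v → ¬ Consec n σ u v) →
          IsClosure n σ A B →
          (∀ v ∈ B, ¬ Problematic G W k v) →
          B.card ≤ k + 2 →
          ∀ u ∈ A, ∀ v ∈ A, u ≠ v → ¬ G.Adj u v := by
  refine ⟨100, by norm_num, ?_⟩
  intro V _ _ G _ n k σ W hstar A B hcons hclos hprob hBcard u hu v hv hne hadj
  obtain ⟨hcardV, ⟨hσbij, hσadj⟩, hα, hWcard, hnocyc, hn⟩ := hstar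
  -- basic numerics
  have hk1 : 1 ≤ k := by
    have := hα {u} (by
      intro x hx y hy hxy
      rw [Finset.mem_singleton] at hx hy
      exact absurd (hx.trans hy.symm) hxy)
    simpa using this
  have hkR : (1 : ℝ) ≤ (k : ℝ) := by exact_mod_cast hk1
  have h1 : (k : ℝ) ≤ (k : ℝ) ^ ((11 : ℝ) / 5) := by
    calc (k : ℝ) = (k : ℝ) ^ (1 : ℝ) := (Real.rpow_one _).symm
      _ ≤ _ := Real.rpow_le_rpow_of_exponent_le hkR (by norm_num)
  have h2 : (100 : ℝ) * (k : ℝ) ≤ (n : ℝ) := le_trans (by nlinarith) hn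
  have hn100k : 100 * k ≤ n := by exact_mod_cast h2
  have hn0 : 0 < n := by omega
  have hσinj : Function.Injective σ := hσbij.1
  have hcancel : ∀ (b : ZMod n) {x y : ℕ}, σ (b + (x : ZMod n)) = σ (b + (y : ZMod n)) →
      ((x : ZMod n)) = (y : ZMod n) := by
    intro b x y h
    exact add_left_cancel (hσinj h)
  obtain ⟨⟨i, m, hB⟩, hsubB, -⟩ := hclos
  -- m is small
  have hm : m ≤ k + 2 := by
    by_contra hm'
    push_neg at hm'
    have hsub : (Finset.range (k + 3)).image (fun j : ℕ => σ (i + (j : ZMod n))) ⊆ B := by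
      intro x hx
      obtain ⟨j, hj, rfl⟩ := Finset.mem_image.mp hx
      rw [Finset.mem_range] at hj
      rw [hB]
      exact Finset.mem_image.mpr ⟨j, Finset.mem_range.mpr (by omega), rfl⟩
    have hcard : ((Finset.range (k + 3)).image (fun j : ℕ => σ (i + (j : ZMod n)))).card
        = k + 3 := by
      rw [Finset.card_image_of_injOn, Finset.card_range]
      intro x hx y hy h
      rw [Finset.mem_coe, Finset.mem_range] at hx hy
      exact S4.cast_inj_lt hn0 (by omega) (by omega) (hcancel i h)
    have := Finset.card_le_card hsub
    omega
  -- the key construction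
  have key : ∀ (j₁ j₂ : ℕ), j₁ < m → j₂ < m → j₁ < j₂ → σ (i + (j₁ : ZMod n)) ∈ A →
      σ (i + (j₂ : ZMod n)) ∈ A → G.Adj (σ (i + (j₁ : ZMod n))) (σ (i + (j₂ : ZMod n))) →
      False := by
    intro j₁ j₂ hm1 hm2 hlt hA1 hA2 hadj'
    set a : ZMod n := i + (j₁ : ZMod n) with hadef
    set d : ℕ := j₂ - j₁ with hddef
    have hd1 : 1 ≤ d := by omega
    have hdk : d ≤ k + 1 := by omega
    have hcastd : (i + (j₂ : ZMod n)) = a + (d : ZMod n) := by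
      rw [hadef, hddef, Nat.cast_sub hlt.le]
      ring
    have hneuv : σ (i + (j₁ : ZMod n)) ≠ σ (i + (j₂ : ZMod n)) := by
      intro h
      have := S4.cast_inj_lt hn0 (by omega : j₁ < n) (by omega : j₂ < n) (hcancel i h)
      omega
    have hd2 : 2 ≤ d := by
      rcases eq_or_lt_of_le hd1 with h | h
      · exfalso
        apply hcons _ hA1 _ hA2 hneuv
        refine ⟨a, Or.inl ⟨rfl, ?_⟩⟩
        rw [hcastd, ← h]
        norm_num
      · omega
    have hBm : ∀ t : ℕ, t < m → σ (i + (t : ZMod n)) ∈ B := by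
      intro t ht
      rw [hB]
      exact Finset.mem_image.mpr ⟨t, Finset.mem_range.mpr ht, rfl⟩
    have hdeg : ∀ j : ℕ, 1 ≤ j → j ≤ d - 1 → 2 * k + 1 ≤ G.degree (σ (a + (j : ZMod n))) := by
      intro j h1j hjd
      have haj : a + (j : ZMod n) = i + ((j₁ + j : ℕ) : ZMod n) := by
        rw [hadef]
        push_cast
        ring
      have hmem : σ (a + (j : ZMod n)) ∈ B := by
        rw [haj]
        exact hBm _ (by omega)
      have h' : ¬ (G.degree (σ (a + (j : ZMod n))) ≤ 2 * k ∨ σ (a + (j : ZMod n)) ∈ W) :=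
        hprob _ hmem
      push_neg at h'
      omega
    obtain ⟨u', c', hcyc', hlen', hsup'⟩ := S4.build_cycle hσbij hσadj hα a d hd2 hdk
      (by omega) (hcastd ▸ hadj') hdeg
    have hωB : σ (a + 1) ∈ B := by
      have : a + 1 = i + ((j₁ + 1 : ℕ) : ZMod n) := by
        rw [hadef]
        push_cast
        ring
      rw [this]
      exact hBm _ (by omega)
    have hωW : σ (a + 1) ∉ W := by
      intro h
      exact hprob _ hωB (Or.inr h)
    apply hnocyc
    refine ⟨u', c', hcyc', hlen', ?_⟩
    intro x hx
    apply hsup'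
    intro hEq
    exact hωW (hEq ▸ (Finset.mem_coe.mp hx))
  -- extract indices for u and v
  obtain ⟨j₁, hj₁, hσu⟩ := Finset.mem_image.mp (hB ▸ hsubB hu)
  obtain ⟨j₂, hj₂, hσv⟩ := Finset.mem_image.mp (hB ▸ hsubB hv)
  rw [Finset.mem_range] at hj₁ hj₂
  rcases lt_trichotomy j₁ j₂ with h | h | h
  · exact key j₁ j₂ hj₁ hj₂ h (hσu ▸ hu) (hσv ▸ hv) (by rw [hσu, hσv]; exact hadj)
  · apply hne
    rw [← hσu, ← hσv, h]
  · exact key j₂ j₁ hj₂ hj₁ h (hσv ▸ hv) (hσu ▸ hu) (by rw [hσu, hσv]; exact hadj.symm)
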